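/- Let U ∈ 𝒰 be differentiable on (0,π] and let V : (0,π] → ℝ be differentiable, and suppose there is C₀ > 0 such that 0 ≤ U'(t) ≤ C₀·h_U(t) and |V'(t)| ≤ C₀·h_U(t) for all t ∈ (0,π]. Define the curve z(t) := exp(−U(t) − iV(t)). Then there exists a constant C > 0 such that for every ε ∈ (0,π): the hyperbolic length ∫_ε^π 2|z'(t)|/(1 − |z(t)|²) dt ≤ C·∫_ε^π h_U(t)/U(t) dt. -/

import Mathlib

open MeasureTheory Filter Set Complex

noncomputable section

noncomputable def hU (U : ℝ → ℝ) (t : ℝ) : ℝ := ∫ x in t..Real.pi, U x / x ^ 2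

def ClassU (U : ℝ → ℝ) : Prop :=
  Continuous U ∧ (∀ t, U (-t) = U t) ∧ Function.Periodic U (2 * Real.pi) ∧
  U 0 = 0 ∧ MonotoneOn U (Set.Icc 0 Real.pi) ∧
  (∀ t, 0 < t → t ≤ Real.pi → 0 < U t) ∧
  Tendsto (fun t => hU U t) (nhdsWithin 0 (Set.Ioi 0)) atTop

theorem stmt13 (U U' V V' : ℝ → ℝ) (hU_mem : ClassU U)
    (hUderiv : ∀ t ∈ Set.Ioc (0 : ℝ) Real.pi, HasDerivAt U (U' t) t)
    (hVderiv : ∀ t ∈ Set.Ioc (0 : ℝ) Real.pi, HasDerivAt V (V' t) t)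
    (C₀ : ℝ) (hC₀ : 0 < C₀)
    (hbound : ∀ t ∈ Set.Ioc (0 : ℝ) Real.pi,
      0 ≤ U' t ∧ U' t ≤ C₀ * hU U t ∧ |V' t| ≤ C₀ * hU U t) :
    ∃ C : ℝ, 0 < C ∧ ∀ ε : ℝ, 0 < ε → ε < Real.pi →
      (∫ t in ε..Real.pi,
          2 * ‖deriv (fun s : ℝ =>
              Complex.exp (-(U s : ℂ) - Complex.I * (V s : ℂ))) t‖ /
            (1 - ‖Complex.exp (-(U t : ℂ) - Complex.I * (V t : ℂ))‖ ^ 2))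
        ≤ C * ∫ t in ε..Real.pi, hU U t / U t := by
  obtain ⟨hcont, heven, hper, hU0, hmono, hpos, htend⟩ := hU_mem
  set M := U Real.pi with hM
  have hMnn : 0 ≤ M := (hpos Real.pi Real.pi_pos le_rfl).le
  set C : ℝ := 2 * C₀ * Real.exp (2 * M) with hC
  have hCpos : 0 < C := by positivity
  refine ⟨C, hCpos, ?_⟩
  intro ε hε hεπ
  have hεπ' : ε ≤ Real.pi := hεπ.le
  set f : ℝ → ℝ := fun t =>
      2 * ‖deriv (fun s : ℝ =>
          Complex.exp (-(U s : ℂ) - Complex.I * (V s : ℂ))) t‖ /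
        (1 - ‖Complex.exp (-(U t : ℂ) - Complex.I * (V t : ℂ))‖ ^ 2) with hf
  set g : ℝ → ℝ := fun t => C * (hU U t / U t) with hg
  -- basic facts for t ∈ Ioc ε π
  have hfacts : ∀ t ∈ Set.Ioc ε Real.pi, 0 ≤ f t ∧ f t ≤ g t := by
    intro t ht
    have ht0 : 0 < t := hε.trans ht.1
    have htπ : t ≤ Real.pi := ht.2
    have htmem : t ∈ Set.Ioc (0 : ℝ) Real.pi := ⟨ht0, htπ⟩
    have hUt : 0 < U t := hpos t ht0 htπ
    have hUtM : U t ≤ M := hmono ⟨ht0.le, htπ⟩ ⟨Real.pi_pos.le, le_rfl⟩ htπ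
    have hhUnn : 0 ≤ hU U t := by
      apply intervalIntegral.integral_nonneg htπ
      intro x hx
      exact div_nonneg (hpos x (lt_of_lt_of_le ht0 hx.1) hx.2).le (by positivity)
    obtain ⟨hb1, hb2, hb3⟩ := hbound t htmem
    -- derivative computation
    have h1 : HasDerivAt (fun s : ℝ => ((U s : ℂ))) (U' t) t :=
      (hUderiv t htmem).ofReal_comp
    have h2 : HasDerivAt (fun s : ℝ => ((V s : ℂ))) (V' t) t :=
      (hVderiv t htmem).ofReal_comp
    have h3 : HasDerivAt (fun s : ℝ => -(U s : ℂ) - Complex.I * (V s : ℂ))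
        (-(U' t : ℂ) - Complex.I * (V' t : ℂ)) t := h1.neg.sub (h2.const_mul Complex.I)
    have h4 := h3.cexp
    have hderiv : deriv (fun s : ℝ =>
        Complex.exp (-(U s : ℂ) - Complex.I * (V s : ℂ))) t =
        Complex.exp (-(U t : ℂ) - Complex.I * (V t : ℂ)) *
          (-(U' t : ℂ) - Complex.I * (V' t : ℂ)) := h4.deriv
    have hnz : ‖Complex.exp (-(U t : ℂ) - Complex.I * (V t : ℂ))‖ = Real.exp (-(U t)) := by
      rw [Complex.norm_exp]
      norm_num
    have hnum : ‖-(U' t : ℂ) - Complex.I * (V' t : ℂ)‖ ≤ 2 * (C₀ * hU U t) := by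
      calc ‖-(U' t : ℂ) - Complex.I * (V' t : ℂ)‖
          ≤ ‖-(U' t : ℂ)‖ + ‖Complex.I * (V' t : ℂ)‖ := norm_sub_le _ _
        _ = |U' t| + |V' t| := by simp
        _ ≤ C₀ * hU U t + C₀ * hU U t := by
            refine add_le_add ?_ hb3
            rw [_root_.abs_of_nonneg hb1]; exact hb2
        _ = 2 * (C₀ * hU U t) := by ring
    have hexp1 : Real.exp (-(U t)) ≤ 1 := Real.exp_le_one_iff.2 (by linarith)
    -- denominator bound
    have hsq : Real.exp (-(U t)) ^ 2 = Real.exp (-(2 * U t)) := by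
      rw [sq, ← Real.exp_add]; ring_nf
    have hden : 2 * U t * Real.exp (-(2 * M)) ≤ 1 - Real.exp (-(U t)) ^ 2 := by
      rw [hsq]
      have e1 : Real.exp (-(2 * M)) ≤ Real.exp (-(2 * U t)) :=
        Real.exp_le_exp.2 (by linarith)
      have e2 : 2 * U t + 1 ≤ Real.exp (2 * U t) := Real.add_one_le_exp _
      have e3 : Real.exp (2 * U t) * Real.exp (-(2 * U t)) = 1 := by
        rw [← Real.exp_add]; norm_num
      have e4 : 0 < Real.exp (-(2 * U t)) := Real.exp_pos _
      nlinarith [Real.exp_pos (-(2 * M))]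
    have hdenpos : 0 < 2 * U t * Real.exp (-(2 * M)) := by positivity
    have hdpos : 0 < 1 - Real.exp (-(U t)) ^ 2 := lt_of_lt_of_le hdenpos hden
    have hnormderiv : ‖deriv (fun s : ℝ =>
        Complex.exp (-(U s : ℂ) - Complex.I * (V s : ℂ))) t‖ =
        Real.exp (-(U t)) * ‖-(U' t : ℂ) - Complex.I * (V' t : ℂ)‖ := by
      rw [hderiv, norm_mul, hnz]
    constructor
    · apply div_nonneg (by positivity)
      rw [hnz]; exact hdpos.le
    · rw [hf, hg]
      simp only
      rw [hnormderiv, hnz]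
      have hle : 2 * (Real.exp (-(U t)) * ‖-(U' t : ℂ) - Complex.I * (V' t : ℂ)‖) /
          (1 - Real.exp (-(U t)) ^ 2) ≤
          (2 * (2 * (C₀ * hU U t))) / (2 * U t * Real.exp (-(2 * M))) := by
        apply div_le_div₀ (by positivity) ?_ hdenpos hden
        have : Real.exp (-(U t)) * ‖-(U' t : ℂ) - Complex.I * (V' t : ℂ)‖ ≤
            2 * (C₀ * hU U t) := by
          calc Real.exp (-(U t)) * ‖-(U' t : ℂ) - Complex.I * (V' t : ℂ)‖
              ≤ 1 * (2 * (C₀ * hU U t)) :=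
                mul_le_mul hexp1 hnum (norm_nonneg _) one_pos.le
            _ = 2 * (C₀ * hU U t) := one_mul _
        linarith
      refine hle.trans (le_of_eq ?_)
      rw [Real.exp_neg, hC]
      field_simp
  -- integrability of g on [ε, π]
  have hFcont : ContinuousOn (fun x : ℝ => U x / x ^ 2) (Set.Icc ε Real.pi) := by
    apply hcont.continuousOn.div (continuous_pow 2).continuousOn
    intro x hx
    exact pow_ne_zero 2 (ne_of_gt (lt_of_lt_of_le hε hx.1))
  have hFint : IntegrableOn (fun x : ℝ => U x / x ^ 2) (Set.uIcc ε Real.pi) := by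
    rw [Set.uIcc_of_le hεπ']
    exact hFcont.integrableOn_Icc
  have hprim : ContinuousOn (fun t => ∫ x in ε..t, U x / x ^ 2) (Set.uIcc ε Real.pi) :=
    intervalIntegral.continuousOn_primitive_interval hFint
  have hUeq : ∀ t ∈ Set.Icc ε Real.pi,
      hU U t = (∫ x in ε..Real.pi, U x / x ^ 2) - ∫ x in ε..t, U x / x ^ 2 := by
    intro t ht
    have i1 : IntervalIntegrable (fun x : ℝ => U x / x ^ 2) volume ε t := by
      apply (hFcont.mono ?_).intervalIntegrable
      rw [Set.uIcc_of_le ht.1]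
      exact Set.Icc_subset_Icc le_rfl ht.2
    have i2 : IntervalIntegrable (fun x : ℝ => U x / x ^ 2) volume t Real.pi := by
      apply (hFcont.mono ?_).intervalIntegrable
      rw [Set.uIcc_of_le ht.2]
      exact Set.Icc_subset_Icc ht.1 le_rfl
    have := intervalIntegral.integral_add_adjacent_intervals i1 i2
    rw [hU, ← this]
    ring
  have hhUcont : ContinuousOn (hU U) (Set.Icc ε Real.pi) := by
    have h' : ContinuousOn (fun t => (∫ x in ε..Real.pi, U x / x ^ 2) -
        ∫ x in ε..t, U x / x ^ 2) (Set.Icc ε Real.pi) := by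
      apply (continuousOn_const.sub hprim).mono
      rw [Set.uIcc_of_le hεπ']
    exact h'.congr hUeq
  have hgcont : ContinuousOn g (Set.Icc ε Real.pi) := by
    apply continuousOn_const.mul
    apply hhUcont.div hcont.continuousOn
    intro x hx
    exact (hpos x (lt_of_lt_of_le hε hx.1) hx.2).ne'
  have hgint : IntegrableOn g (Set.Ioc ε Real.pi) volume :=
    hgcont.integrableOn_Icc.mono_set Set.Ioc_subset_Icc_self
  -- conclude
  rw [intervalIntegral.integral_of_le hεπ', intervalIntegral.integral_of_le hεπ',
    ← MeasureTheory.integral_const_mul]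
  apply MeasureTheory.integral_mono_of_nonneg
  · rw [Filter.EventuallyLE, ae_restrict_iff' measurableSet_Ioc]
    exact Filter.Eventually.of_forall fun t ht => (hfacts t ht).1
  · exact hgint
  · rw [Filter.EventuallyLE, ae_restrict_iff' measurableSet_Ioc]
    exact Filter.Eventually.of_forall fun t ht => (hfacts t ht).2

end
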